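/- (Periplectic relations, case (b): g₁ = Λ²(id), g₋₁ = S²(id*).) Let n ≥ 4. Let X⁺ be the odd matrix whose upper-right block is E_{n,n+1} − E_{n+1,n} and whose other blocks are zero (the lowest weight vector of the g₀-module g₁), and let X⁻ be the odd matrix whose lower-left block is E_{n+1,n+1} and whose other blocks are zero (the highest weight vector of g₋₁). Then, with all brackets the superbracket: (i) [Xₙ⁺, [Xₙ⁺, X⁺]] = 0; (ii) [Xᵢ⁺, X⁺] = 0 for all 1 ≤ i ≤ n−2, and [Xₙ₋₁⁺, [Xₙ₋₁⁺, X⁺]] = 0; (iii) [X⁺, X⁺] = 0 and [X⁻, X⁻] = 0; (iv) [Xᵢ⁻, X⁻] = 0 for all 1 ≤ i ≤ n−1, and [Xₙ⁻, [Xₙ⁻, [Xₙ⁻, X⁻]]] = 0 while [Xₙ⁻, [Xₙ⁻, X⁻]] ≠ 0; (v) the periplectic relations [X⁺, [Xₙ⁺, [Xₙ⁺, X⁺]]] = 0 and [X⁻, [Xₙ⁻, [Xₙ₋₁⁻, X⁻]]] = 0 hold. These are the defining relations of case (b) of §2.2.4 of the paper, for the Lie superalgebra spe(n+1) with its other compatible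 ℤ-grading. -/

import Mathlib

/-- gl(n+1|n+1) realized as 2(n+1) × 2(n+1) complex matrices in 2 × 2 block
form, the two blocks of rows/columns indexed by the two copies of `Fin (n+1)`. -/
abbrev GLmat (n : ℕ) := Matrix (Fin (n + 1) ⊕ Fin (n + 1)) (Fin (n + 1) ⊕ Fin (n + 1)) ℂ

/-- The (n+1) × (n+1) matrix unit E_{a,b}. -/
noncomputable def Eunit (n : ℕ) (a b : Fin (n + 1)) : Matrix (Fin (n + 1)) (Fin (n + 1)) ℂ :=
  Matrix.single a b 1

/-- Xᵢ⁺ (for i : Fin n, 0-based; paper's X_{i+1}⁺): the even matrix with diagonal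
blocks (E_{i,i+1}, −E_{i+1,i}) and zero off-diagonal blocks. -/
noncomputable def Xp (n : ℕ) (i : Fin n) : GLmat n :=
  Matrix.fromBlocks (Eunit n i.castSucc i.succ) 0 0 (-(Eunit n i.succ i.castSucc))

/-- Xᵢ⁻ (for i : Fin n, 0-based; paper's X_{i+1}⁻): the even matrix with diagonal
blocks (E_{i+1,i}, −E_{i,i+1}) and zero off-diagonal blocks. -/
noncomputable def Xm (n : ℕ) (i : Fin n) : GLmat n :=
  Matrix.fromBlocks (Eunit n i.succ i.castSucc) 0 0 (-(Eunit n i.castSucc i.succ))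

/-- The superbracket of two even, or an even and an odd, matrix: the commutator. -/
noncomputable def scomm {n : ℕ} (A B : GLmat n) : GLmat n := A * B - B * A

/-- The superbracket of two odd matrices: the anticommutator. -/
noncomputable def sacomm {n : ℕ} (A B : GLmat n) : GLmat n := A * B + B * A


section SpeAux
open Matrix

lemma Emul {n : ℕ} (a b c d : Fin (n+1)) :
    Eunit n a b * Eunit n c d = if b = c then Eunit n a d else 0 := by
  unfold Eunit
  split
  · next h => subst h; simp
  · next h => exact Matrix.single_mul_single_of_ne (c := (1 : ℂ)) a b c h 1

lemma scomm_ur {n : ℕ} (A D B : Matrix (Fin (n+1)) (Fin (n+1)) ℂ) :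
    scomm (Matrix.fromBlocks A 0 0 D) (Matrix.fromBlocks 0 B 0 0)
      = Matrix.fromBlocks 0 (A * B - B * D) 0 0 := by
  unfold scomm
  rw [Matrix.fromBlocks_multiply, Matrix.fromBlocks_multiply]
  ext (i|i) (j|j) <;> simp [Matrix.fromBlocks]

lemma scomm_ll {n : ℕ} (A D C : Matrix (Fin (n+1)) (Fin (n+1)) ℂ) :
    scomm (Matrix.fromBlocks A 0 0 D) (Matrix.fromBlocks 0 0 C 0)
      = Matrix.fromBlocks 0 0 (D * C - C * A) 0 := by
  unfold scomm
  rw [Matrix.fromBlocks_multiply, Matrix.fromBlocks_multiply]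
  ext (i|i) (j|j) <;> simp [Matrix.fromBlocks]

lemma sacomm_ur {n : ℕ} (B B' : Matrix (Fin (n+1)) (Fin (n+1)) ℂ) :
    sacomm (Matrix.fromBlocks 0 B 0 0) (Matrix.fromBlocks 0 B' 0 0) = 0 := by
  simp [sacomm, Matrix.fromBlocks_multiply]

lemma sacomm_ll {n : ℕ} (C C' : Matrix (Fin (n+1)) (Fin (n+1)) ℂ) :
    sacomm (Matrix.fromBlocks 0 0 C 0) (Matrix.fromBlocks 0 0 C' 0) = 0 := by
  simp [sacomm, Matrix.fromBlocks_multiply]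

end SpeAux

lemma Xp_eq {n : ℕ} (i : Fin n) (x y : Fin (n+1)) (hx : i.castSucc = x) (hy : i.succ = y) :
    Xp n i = Matrix.fromBlocks (Eunit n x y) 0 0 (-(Eunit n y x)) := by
  subst hx hy; rfl

lemma Xm_eq {n : ℕ} (i : Fin n) (x y : Fin (n+1)) (hx : i.castSucc = x) (hy : i.succ = y) :
    Xm n i = Matrix.fromBlocks (Eunit n y x) 0 0 (-(Eunit n x y)) := by
  subst hx hy; rfl

set_option maxHeartbeats 1000000 in
/-- periplectic relations, case (b): g₁ = Λ²(id), g₋₁ = S²(id*).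
For n ≥ 4, with X⁺ the odd matrix whose upper-right block is E_{n,n+1} − E_{n+1,n}
(the lowest weight vector of g₁) and X⁻ the odd matrix whose lower-left block is
E_{n+1,n+1} (the highest weight vector of g₋₁), the superbracket relations
(i)–(v) of §2.2.4, case (b), hold for spe(n+1).
(Xᵢ of the paper is `Xp n ⟨i−1,_⟩`/`Xm n ⟨i−1,_⟩`; brackets between an even Xᵢ±
and an odd element are commutators, those between two odd elements are
anticommutators.) -/
theorem spe_case_b_relations (n : ℕ) (hn : 4 ≤ n)
    (Xplus Xminus : GLmat n)
    (hXp : Xplus = Matrix.fromBlocks 0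
      (Eunit n ⟨n - 1, by omega⟩ (Fin.last n) - Eunit n (Fin.last n) ⟨n - 1, by omega⟩) 0 0)
    (hXm : Xminus = Matrix.fromBlocks 0 0 (Eunit n (Fin.last n) (Fin.last n)) 0) :
    -- (i) (ad Xₙ⁺)² X⁺ = 0
    scomm (Xp n ⟨n - 1, by omega⟩) (scomm (Xp n ⟨n - 1, by omega⟩) Xplus) = 0 ∧
    -- (ii) [Xᵢ⁺, X⁺] = 0 for 1 ≤ i ≤ n−2 (0-based: i < n−2), and (ad Xₙ₋₁⁺)² X⁺ = 0
    (∀ i : Fin n, (i : ℕ) < n - 2 → scomm (Xp n i) Xplus = 0) ∧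
    scomm (Xp n ⟨n - 2, by omega⟩) (scomm (Xp n ⟨n - 2, by omega⟩) Xplus) = 0 ∧
    -- (iii) [X⁺, X⁺] = 0 and [X⁻, X⁻] = 0
    sacomm Xplus Xplus = 0 ∧ sacomm Xminus Xminus = 0 ∧
    -- (iv) [Xᵢ⁻, X⁻] = 0 for 1 ≤ i ≤ n−1, (ad Xₙ⁻)³ X⁻ = 0 while (ad Xₙ⁻)² X⁻ ≠ 0
    (∀ i : Fin n, (i : ℕ) < n - 1 → scomm (Xm n i) Xminus = 0) ∧
    scomm (Xm n ⟨n - 1, by omega⟩) (scomm (Xm n ⟨n - 1, by omega⟩)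
      (scomm (Xm n ⟨n - 1, by omega⟩) Xminus)) = 0 ∧
    scomm (Xm n ⟨n - 1, by omega⟩) (scomm (Xm n ⟨n - 1, by omega⟩) Xminus) ≠ 0 ∧
    -- (v) the periplectic relations (PeR±)
    sacomm Xplus (scomm (Xp n ⟨n - 1, by omega⟩)
      (scomm (Xp n ⟨n - 1, by omega⟩) Xplus)) = 0 ∧
    sacomm Xminus (scomm (Xm n ⟨n - 1, by omega⟩)
      (scomm (Xm n ⟨n - 2, by omega⟩) Xminus)) = 0 := by
  subst hXp hXm
  have hn1 : n - 1 < n + 1 := by omega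
  have hn2 : n - 2 < n + 1 := by omega
  set a : Fin (n+1) := ⟨n - 1, hn1⟩ with ha
  set b : Fin (n+1) := Fin.last n with hb
  set c : Fin (n+1) := ⟨n - 2, hn2⟩ with hc
  have hc1 : (⟨n - 1, by omega⟩ : Fin n).castSucc = a := Fin.ext (by simp [ha])
  have hs1 : (⟨n - 1, by omega⟩ : Fin n).succ = b := Fin.ext (by simp [hb]; omega)
  have hc2 : (⟨n - 2, by omega⟩ : Fin n).castSucc = c := Fin.ext (by simp [hc])
  have hs2 : (⟨n - 2, by omega⟩ : Fin n).succ = a := Fin.ext (by simp [ha]; omega)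
  have hXpn : Xp n ⟨n - 1, by omega⟩ = Matrix.fromBlocks (Eunit n a b) 0 0 (-(Eunit n b a)) := Xp_eq _ _ _ hc1 hs1
  have hXpn1 : Xp n ⟨n - 2, by omega⟩ = Matrix.fromBlocks (Eunit n c a) 0 0 (-(Eunit n a c)) := Xp_eq _ _ _ hc2 hs2
  have hXmn : Xm n ⟨n - 1, by omega⟩ = Matrix.fromBlocks (Eunit n b a) 0 0 (-(Eunit n a b)) := Xm_eq _ _ _ hc1 hs1
  have hXmn1 : Xm n ⟨n - 2, by omega⟩ = Matrix.fromBlocks (Eunit n a c) 0 0 (-(Eunit n c a)) := Xm_eq _ _ _ hc2 hs2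
  have hab : a ≠ b := by simp [ha, hb, Fin.ext_iff]; omega
  have hba : b ≠ a := hab.symm
  have hac : a ≠ c := by simp [ha, hc, Fin.ext_iff]; omega
  have hca : c ≠ a := hac.symm
  have hbc : b ≠ c := by simp [hb, hc, Fin.ext_iff]; omega
  have hcb : c ≠ b := hbc.symm
  -- first bracket [Xₙ⁺, X⁺] = 0
  have key1 : scomm (Xp n ⟨n - 1, by omega⟩)
      (Matrix.fromBlocks 0 (Eunit n a b - Eunit n b a) 0 0) = 0 := by
    rw [hXpn, scomm_ur]
    have : Eunit n a b * (Eunit n a b - Eunit n b a)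
        - (Eunit n a b - Eunit n b a) * -Eunit n b a = 0 := by
      simp [mul_sub, sub_mul, Emul, hab, hba]
    rw [this]
    simp
  refine ⟨?_, ?_, ?_, ?_, ?_, ?_, ?_, ?_, ?_, ?_⟩
  · rw [key1]; simp [scomm]
  · intro i hi
    have h1 : i.castSucc ≠ a ∧ i.succ ≠ a ∧ i.castSucc ≠ b ∧ i.succ ≠ b ∧
        a ≠ i.castSucc ∧ a ≠ i.succ ∧ b ≠ i.castSucc ∧ b ≠ i.succ := by
      refine ⟨?_, ?_, ?_, ?_, ?_, ?_, ?_, ?_⟩ <;>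
        simp [ha, hb, Fin.ext_iff] <;> omega
    obtain ⟨h2, h3, h4, h5, h6, h7, h8, h9⟩ := h1
    unfold Xp
    rw [scomm_ur]
    have : Eunit n i.castSucc i.succ * (Eunit n a b - Eunit n b a)
        - (Eunit n a b - Eunit n b a) * -Eunit n i.succ i.castSucc = 0 := by
      simp [mul_sub, sub_mul, Emul, h2, h3, h4, h5, h6, h7, h8, h9]
    rw [this]
    simp
  · rw [hXpn1, scomm_ur, scomm_ur]
    have e1 : Eunit n c a * (Eunit n a b - Eunit n b a)
        - (Eunit n a b - Eunit n b a) * -Eunit n a c = Eunit n c b - Eunit n b c := by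
      simp [mul_sub, sub_mul, Emul, hab, hba]
    rw [e1]
    have e2 : Eunit n c a * (Eunit n c b - Eunit n b c)
        - (Eunit n c b - Eunit n b c) * -Eunit n a c = 0 := by
      simp [mul_sub, sub_mul, Emul, hac, hca, hbc, hcb, hab, hba]
    rw [e2]
    simp
  · exact sacomm_ur _ _
  · exact sacomm_ll _ _
  · intro i hi
    have h5 : i.succ ≠ b := by simp [hb, Fin.ext_iff]; omega
    have h9 : b ≠ i.succ := h5.symm
    unfold Xm
    rw [scomm_ll]
    have : -Eunit n i.castSucc i.succ * Eunit n b b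
        - Eunit n b b * Eunit n i.succ i.castSucc = 0 := by
      simp [Emul, h5, h9]
    rw [this]
    simp
  · rw [hXmn, scomm_ll, scomm_ll, scomm_ll]
    have e1 : -Eunit n a b * Eunit n b b - Eunit n b b * Eunit n b a
        = -(Eunit n a b + Eunit n b a) := by
      simp [Emul]; abel
    rw [e1]
    have e2 : -Eunit n a b * -(Eunit n a b + Eunit n b a)
        - -(Eunit n a b + Eunit n b a) * Eunit n b a = (2 : ℂ) • Eunit n a a := by
      simp [mul_add, add_mul, neg_mul, mul_neg, Emul, hab, hba, two_smul]
    rw [e2]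
    have e3 : -Eunit n a b * ((2 : ℂ) • Eunit n a a)
        - (2 : ℂ) • Eunit n a a * Eunit n b a = 0 := by
      simp [Matrix.mul_smul, Matrix.smul_mul, Emul, hab, hba]
    rw [e3]
    simp
  · rw [hXmn, scomm_ll, scomm_ll]
    have e1 : -Eunit n a b * Eunit n b b - Eunit n b b * Eunit n b a
        = -(Eunit n a b + Eunit n b a) := by
      simp [Emul]; abel
    rw [e1]
    have e2 : -Eunit n a b * -(Eunit n a b + Eunit n b a)
        - -(Eunit n a b + Eunit n b a) * Eunit n b a = (2 : ℂ) • Eunit n a a := by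
      simp [mul_add, add_mul, neg_mul, mul_neg, Emul, hab, hba, two_smul]
    rw [e2]
    intro h
    have := congrFun (congrFun h (Sum.inr a)) (Sum.inl a)
    simp [Eunit, Matrix.fromBlocks, Matrix.single] at this
  · rw [key1]
    have : scomm (Xp n ⟨n - 1, by omega⟩) (0 : GLmat n) = 0 := by simp [scomm]
    rw [this]
    simp [sacomm]
  · rw [hXmn1, scomm_ll]
    have e1 : -Eunit n c a * Eunit n b b - Eunit n b b * Eunit n a c = 0 := by
      simp [Emul, hab, hba, hac, hca, hbc, hcb]
    rw [e1]
    have : scomm (Xm n ⟨n - 1, by omega⟩) (Matrix.fromBlocks 0 0 (0:Matrix (Fin (n+1)) (Fin (n+1)) ℂ) 0) = 0 := by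
      simp [scomm]
    rw [this]
    simp [sacomm]
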